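/- arXiv:2107.10570 — 4 statements merged into one kernel-verified Lean document; each statement's English description precedes it below -/
import Mathlib

section
/- Let (K,v) be an algebraically closed valued field, E = {z_ν}_{ν<λ} a pseudo monotone sequence in (K,v) with δ_ν strictly monotone (pcs or pds case), and f ∈ K[X] a nonzero polynomial. Write f(X) = c·(X - a₁)···(X - a_n) with a₁,…,a_j exactly the roots of f that are limits of E. Then there is β ∈ v(K^×) such that v(f(z_ν)) = j·δ_ν + β for all ν sufficiently large. Consequently, the sequence {v(f(z_ν))}_{ν<λ} is ultimately constant if and only if no root of f is a limit of E. -/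
open scoped Classical

/-- for an algebraically closed valued field `(K,v)`, a pcs or pds `E`
(with strictly monotone value sequence `δ`, `v(z_ν - z_μ) = min(δ_ν, δ_μ)` for `ν < μ`)
and a nonzero polynomial `f`, with `j` the number of roots of `f` (with multiplicity)
that are limits of `E`, there is `β ∈ v(K^×)` with `v(f(z_ν)) = j•δ_ν + β` ultimately.
Consequently `{v(f(z_ν))}` is ultimately constant iff no root of `f` is a limit of `E`. -/
theorem stmt11 {K : Type*} [Field K] [IsAlgClosed K]
    {Γ : Type*} [AddCommGroup Γ] [LinearOrder Γ] [IsOrderedAddMonoid Γ]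
    (v : AddValuation K (WithTop Γ)) (lam : Ordinal) (hlam : Order.IsSuccLimit lam)
    (z : Ordinal → K) (δ : Ordinal → WithTop Γ)
    (hrep : ∀ ν μ : Ordinal, ν < μ → μ < lam → v (z ν - z μ) = min (δ ν) (δ μ))
    (hmono : (∀ ν μ : Ordinal, ν < μ → μ < lam → δ ν < δ μ) ∨
             (∀ ν μ : Ordinal, ν < μ → μ < lam → δ μ < δ ν))
    (f : Polynomial K) (hf : f ≠ 0) :
    (∃ β : WithTop Γ, (∃ c : K, c ≠ 0 ∧ v c = β) ∧
      ∃ ν₀, ν₀ < lam ∧ ∀ ν, ν₀ ≤ ν → ν < lam →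
        v (f.eval (z ν)) =
          (Multiset.card (f.roots.filter fun a =>
            ∃ ν₀, ν₀ < lam ∧ ∀ ν, ν₀ ≤ ν → ν < lam → v (a - z ν) = δ ν)) • δ ν + β) ∧
    ((∃ γ : WithTop Γ, ∃ ν₀, ν₀ < lam ∧ ∀ ν, ν₀ ≤ ν → ν < lam →
        v (f.eval (z ν)) = γ) ↔
      ∀ a ∈ f.roots,
        ¬ ∃ ν₀, ν₀ < lam ∧ ∀ ν, ν₀ ≤ ν → ν < lam → v (a - z ν) = δ ν) := by
  -- Notation: `P a` means `a` is a limit of the sequence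
  set P : K → Prop := fun a =>
    ∃ ν₀, ν₀ < lam ∧ ∀ ν, ν₀ ≤ ν → ν < lam → v (a - z ν) = δ ν with hP
  -- basic facts
  have hsucc : ∀ {ν : Ordinal}, ν < lam → Order.succ ν < lam := fun h => hlam.succ_lt h
  have hvne : ∀ x : K, x ≠ 0 → v x ≠ ⊤ := by
    intro x hx h
    have h1 : v x + v x⁻¹ = 0 := by
      rw [← v.map_mul, mul_inv_cancel₀ hx, v.map_one]
    rw [h, top_add] at h1
    simp at h1
  have hvzero : ∀ x : K, v x = ⊤ → x = 0 := by
    intro x hx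
    by_contra h
    exact hvne x h hx
  have hδne : ∀ ν μ : Ordinal, ν < μ → μ < lam → δ ν ≠ δ μ := by
    intro ν μ h1 h2
    rcases hmono with hm | hm
    · exact (hm ν μ h1 h2).ne
    · exact (hm ν μ h1 h2).ne'
  have hδtop : ∀ ν : Ordinal, (1 : Ordinal) ≤ ν → ν < lam → δ ν ≠ ⊤ := by
    intro ν h1 h2
    rcases hmono with hm | hm
    · exact (hm ν (Order.succ ν) (Order.lt_succ ν) (hsucc h2)).ne_top
    · exact (hm 0 ν (lt_of_lt_of_le zero_lt_one h1) h2).ne_top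
  -- exclusivity: a root with ultimately constant values is not a limit
  have hexcl : ∀ (a c : K) (ν₁ : Ordinal), ν₁ < lam →
      (∀ ν, ν₁ ≤ ν → ν < lam → v (z ν - a) = v c) → ¬ P a := by
    rintro a c ν₁ hν₁ hconst ⟨ν₂, hν₂, hlim⟩
    set ν := max ν₁ ν₂ with hν
    have hνlam : ν < lam := max_lt hν₁ hν₂
    have hμlam : Order.succ ν < lam := hsucc hνlam
    have h1 : δ ν = v c := by
      rw [← hlim ν (le_max_right _ _) hνlam, v.map_sub_swap, hconst ν (le_max_left _ _) hνlam]
    have h2 : δ (Order.succ ν) = v c := by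
      rw [← hlim _ ((le_max_right _ _).trans (Order.le_succ ν)) hμlam, v.map_sub_swap,
        hconst _ ((le_max_left _ _).trans (Order.le_succ ν)) hμlam]
    exact hδne ν (Order.succ ν) (Order.lt_succ ν) hμlam (h1.trans h2.symm)
  -- the dichotomy: every element is either a limit or has ultimately constant values
  have hdich : ∀ a : K, P a ∨ ∃ ν₀, ν₀ < lam ∧ ∃ c : K, c ≠ 0 ∧
      ∀ ν, ν₀ ≤ ν → ν < lam → v (z ν - a) = v c := by
    intro a
    rcases hmono with hm | hm
    · -- pseudo convergent case
      by_cases hcase : ∀ ν, ν < lam → δ ν ≤ v (a - z ν)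
      · left
        refine ⟨0, (zero_lt_one.trans (Ordinal.one_lt_of_isSuccLimit hlam)), fun ν _ hν => ?_⟩
        have hμ : Order.succ ν < lam := hsucc hν
        have hzz : v (z (Order.succ ν) - z ν) = δ ν := by
          rw [v.map_sub_swap, hrep ν _ (Order.lt_succ ν) hμ,
            min_eq_left (hm ν _ (Order.lt_succ ν) hμ).le]
        have hlt : v (z (Order.succ ν) - z ν) < v (a - z (Order.succ ν)) := by
          rw [hzz]
          exact lt_of_lt_of_le (hm ν _ (Order.lt_succ ν) hμ) (hcase _ hμ)
        have : v (a - z ν) = v (z (Order.succ ν) - z ν) := by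
          have := v.map_add_eq_of_lt_right (x := a - z (Order.succ ν))
            (y := z (Order.succ ν) - z ν) hlt
          rwa [sub_add_sub_cancel] at this
        rw [this, hzz]
      · right
        push_neg at hcase
        obtain ⟨ν₁, hν₁, hlt⟩ := hcase
        refine ⟨ν₁, hν₁, a - z ν₁, ?_, fun ν hle hν => ?_⟩
        · intro h0
          rw [h0, v.map_zero] at hlt
          exact (lt_irrefl _ (lt_of_le_of_lt le_top hlt))
        · rcases eq_or_lt_of_le hle with rfl | hltν
          · rw [v.map_sub_swap]
          · have hzz : v (z ν₁ - z ν) = δ ν₁ := by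
              rw [hrep ν₁ ν hltν hν, min_eq_left (hm ν₁ ν hltν hν).le]
            have : v (a - z ν) = v (a - z ν₁) := by
              have h := v.map_add_eq_of_lt_left (x := a - z ν₁) (y := z ν₁ - z ν)
                (by rw [hzz]; exact hlt)
              rwa [sub_add_sub_cancel] at h
            rw [v.map_sub_swap, this]
    · -- pseudo divergent case
      by_cases hcase : ∃ ν₂, ν₂ < lam ∧ ∀ μ, ν₂ < μ → μ < lam → δ μ < v (a - z ν₂)
      · left
        obtain ⟨ν₂, hν₂, hlt⟩ := hcase
        refine ⟨Order.succ ν₂, hsucc hν₂, fun ν hle hν => ?_⟩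
        have hνgt : ν₂ < ν := lt_of_lt_of_le (Order.lt_succ ν₂) hle
        have hzz : v (z ν₂ - z ν) = δ ν := by
          rw [hrep ν₂ ν hνgt hν, min_eq_right (hm ν₂ ν hνgt hν).le]
        have h := v.map_add_eq_of_lt_right (x := a - z ν₂) (y := z ν₂ - z ν)
          (by rw [hzz]; exact hlt ν hνgt hν)
        rwa [sub_add_sub_cancel, hzz] at h
      · right
        push_neg at hcase
        refine ⟨0, (zero_lt_one.trans (Ordinal.one_lt_of_isSuccLimit hlam)), a - z 0, ?_, ?_⟩
        · -- a ≠ z 0 : otherwise δ μ < v (a - z 0) = ⊤ would hold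
          intro h0
          obtain ⟨μ, hμgt, hμlam, hμle⟩ := hcase 0 (zero_lt_one.trans (Ordinal.one_lt_of_isSuccLimit hlam))
          rw [h0, v.map_zero, top_le_iff] at hμle
          exact hδtop μ (Order.one_le_iff_pos.2 hμgt) hμlam hμle
        · intro ν hle hν
          rcases eq_or_lt_of_le (zero_le (a := ν)) with rfl | hνpos
          · rw [v.map_sub_swap]
          · obtain ⟨μ, hμgt, hμlam, hμle⟩ := hcase ν hν
            have hzz : v (z ν - z 0) = δ ν := by
              rw [v.map_sub_swap, hrep 0 ν hνpos hν, min_eq_right (hm 0 ν hνpos hν).le]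
            have hlt2 : v (a - z ν) < v (z ν - z 0) := by
              rw [hzz]
              exact lt_of_le_of_lt hμle (hm ν μ hμgt hμlam)
            have h := v.map_add_eq_of_lt_left (x := a - z ν) (y := z ν - z 0) hlt2
            rw [sub_add_sub_cancel] at h
            rw [v.map_sub_swap, ← h, v.map_sub_swap]
  -- v of a multiset product is the sum of the values
  have hvprod : ∀ s : Multiset K, v s.prod = (s.map (v ·)).sum := by
    intro s
    induction s using Multiset.induction with
    | empty => simp [v.map_one]
    | cons a t ih => rw [Multiset.prod_cons, v.map_mul, Multiset.map_cons, Multiset.sum_cons, ih]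
  -- the key summation lemma, by induction on the multiset of roots
  have hsum : ∀ s : Multiset K, ∃ ν₀, ν₀ < lam ∧ ∃ c : K, c ≠ 0 ∧
      ∀ ν, ν₀ ≤ ν → ν < lam →
        (s.map (fun a => v (z ν - a))).sum = (Multiset.card (s.filter P)) • δ ν + v c := by
    intro s
    induction s using Multiset.induction with
    | empty =>
      exact ⟨0, (zero_lt_one.trans (Ordinal.one_lt_of_isSuccLimit hlam)), 1, one_ne_zero, fun ν _ _ => by simp [v.map_one]⟩
    | cons a t ih =>
      obtain ⟨ν₀, hν₀, c, hc, ihs⟩ := ih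
      rcases hdich a with hPa | ⟨ν₁, hν₁, c₁, hc₁, hconst⟩
      · obtain ⟨ν₁, hν₁, hlim⟩ := hPa
        refine ⟨max ν₀ ν₁, max_lt hν₀ hν₁, c, hc, fun ν hle hν => ?_⟩
        rw [Multiset.map_cons, Multiset.sum_cons,
          ihs ν ((le_max_left _ _).trans hle) hν,
          Multiset.filter_cons_of_pos _ ⟨ν₁, hν₁, hlim⟩, Multiset.card_cons,
          v.map_sub_swap, hlim ν ((le_max_right _ _).trans hle) hν, succ_nsmul]
        abel
      · have hnPa : ¬ P a := hexcl a c₁ ν₁ hν₁ hconst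
        refine ⟨max ν₀ ν₁, max_lt hν₀ hν₁, c₁ * c, mul_ne_zero hc₁ hc, fun ν hle hν => ?_⟩
        rw [Multiset.map_cons, Multiset.sum_cons,
          ihs ν ((le_max_left _ _).trans hle) hν,
          Multiset.filter_cons_of_neg _ hnPa,
          hconst ν ((le_max_right _ _).trans hle) hν, v.map_mul]
        abel
  -- the key statement about v (f (z ν))
  have key : ∃ ν₀, ν₀ < lam ∧ ∃ C : K, C ≠ 0 ∧ ∀ ν, ν₀ ≤ ν → ν < lam →
      v (f.eval (z ν)) = (Multiset.card (f.roots.filter P)) • δ ν + v C := by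
    obtain ⟨ν₀, hν₀, c, hc, hs⟩ := hsum f.roots
    have hlc : f.leadingCoeff ≠ 0 := Polynomial.leadingCoeff_ne_zero.2 hf
    refine ⟨ν₀, hν₀, f.leadingCoeff * c, mul_ne_zero hlc hc, fun ν hle hν => ?_⟩
    have hfeq : f = Polynomial.C f.leadingCoeff *
        (f.roots.map (fun a => Polynomial.X - Polynomial.C a)).prod :=
      (IsAlgClosed.splits f).eq_prod_roots
    have heval : f.eval (z ν) = f.leadingCoeff *
        (f.roots.map (fun a => z ν - a)).prod := by
      conv_lhs => rw [hfeq]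
      rw [Polynomial.eval_mul, Polynomial.eval_C, Polynomial.eval_multiset_prod,
        Multiset.map_map]
      simp
    rw [heval, v.map_mul, hvprod, Multiset.map_map]
    have : (Multiset.map ((v ·) ∘ fun a => z ν - a) f.roots) =
        f.roots.map (fun a => v (z ν - a)) := rfl
    rw [this, hs ν hle hν, v.map_mul]
    abel
  obtain ⟨ν₀, hν₀, C, hC, hkey⟩ := key
  constructor
  · exact ⟨v C, ⟨C, hC, rfl⟩, ν₀, hν₀, hkey⟩
  constructor
  · -- ultimately constant → no root is a limit
    rintro ⟨γ, ν₂, hν₂, hγ⟩ a ha hPa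
    have hmem : a ∈ f.roots.filter P := Multiset.mem_filter.2 ⟨ha, hPa⟩
    set j := Multiset.card (f.roots.filter P) with hj
    have hjpos : j ≠ 0 := by
      intro h
      rw [hj, Multiset.card_eq_zero] at h
      rw [h] at hmem
      exact Multiset.notMem_zero a hmem
    set ν := max (max ν₀ ν₂) 1 with hνdef
    have hνlam : ν < lam := max_lt (max_lt hν₀ hν₂) (Ordinal.one_lt_of_isSuccLimit hlam)
    set μ := Order.succ ν with hμdef
    have hμlam : μ < lam := hsucc hνlam
    have h1 : j • δ ν + v C = γ := by
      rw [← hkey ν ((le_max_left _ _).trans (le_max_left _ _)) hνlam]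
      exact hγ ν ((le_max_right _ _).trans (le_max_left _ _)) hνlam
    have h2 : j • δ μ + v C = γ := by
      rw [← hkey μ (((le_max_left _ _).trans (le_max_left _ _)).trans (Order.le_succ ν)) hμlam]
      exact hγ μ (((le_max_right _ _).trans (le_max_left _ _)).trans (Order.le_succ ν)) hμlam
    -- extract finite values
    obtain ⟨d, hd⟩ := WithTop.ne_top_iff_exists.1 (hδtop ν (le_max_right _ _) hνlam)
    obtain ⟨d', hd'⟩ := WithTop.ne_top_iff_exists.1
      (hδtop μ ((le_max_right _ _).trans (Order.le_succ ν)) hμlam)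
    obtain ⟨b, hb⟩ := WithTop.ne_top_iff_exists.1 (hvne C hC)
    have hdd' : d ≠ d' := by
      intro h
      exact hδne ν μ (Order.lt_succ ν) hμlam (by rw [← hd, ← hd', h])
    have heq : j • d + b = j • d' + b := by
      have h12 := h1.trans h2.symm
      rw [← hd, ← hd', ← hb, ← WithTop.coe_nsmul, ← WithTop.coe_nsmul,
        ← WithTop.coe_add, ← WithTop.coe_add, WithTop.coe_inj] at h12
      exact h12
    have : j • d = j • d' := add_right_cancel heq
    rcases lt_or_gt_of_ne hdd' with hlt | hlt
    · exact (nsmul_lt_nsmul_right hjpos hlt).ne this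
    · exact (nsmul_lt_nsmul_right hjpos hlt).ne' this
  · -- no root is a limit → ultimately constant
    intro h
    have hfil : f.roots.filter P = 0 := Multiset.filter_eq_nil.2 h
    refine ⟨v C, ν₀, hν₀, fun ν hle hν => ?_⟩
    rw [hkey ν hle hν, hfil]
    simp
end

section
/- Let (K,v) be a valued field, E a pseudo monotone sequence in (K,v), and define V_E := { φ ∈ K(X) : v(φ(z_ν)) ≥ 0 for all ν sufficiently large } with maximal ideal M_E := { φ : v(φ(z_ν)) > 0 for all ν sufficiently large }, a valuation ring of K(X) with valuation v_E. Then for φ ∈ K(X): the sequence {v(φ(z_ν))}_{ν<λ} is ultimately constant if and only if v_E(φ) ∈ v(K^×); and in that case v_E(φ) = β where v(φ(z_ν)) = β for all sufficiently large ν. -/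
open Polynomial

theorem myEval_C_mul {K : Type*} [Field K] (c : K) (φ : RatFunc K) (a : K) :
    (RatFunc.C c * φ).eval (RingHom.id K) a = c * φ.eval (RingHom.id K) a := by
  rcases eq_or_ne c 0 with rfl | hc
  · simp
  by_cases hd : Polynomial.eval₂ (RingHom.id K) a φ.denom = 0
  · rw [RatFunc.eval_eq_zero_of_eval₂_denom_eq_zero hd, mul_zero]
    have hdvd : φ.denom ∣ (RatFunc.C c⁻¹).denom * (RatFunc.C c * φ).denom := by
      have h1 : φ = RatFunc.C c⁻¹ * (RatFunc.C c * φ) := by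
        rw [← mul_assoc, ← map_mul, inv_mul_cancel₀ hc, map_one, one_mul]
      conv_lhs => rw [h1]
      exact RatFunc.denom_mul_dvd _ _
    have h2 : Polynomial.eval₂ (RingHom.id K) a ((RatFunc.C c * φ).denom) = 0 := by
      have := eval₂_eq_zero_of_dvd_of_eval₂_eq_zero (RingHom.id K) a hdvd hd
      rw [eval₂_mul] at this
      rcases mul_eq_zero.mp this with h | h
      · rw [RatFunc.denom_C] at h; simp at h
      · exact h
    exact RatFunc.eval_eq_zero_of_eval₂_denom_eq_zero h2
  · have h1 : Polynomial.eval₂ (RingHom.id K) a (RatFunc.C c : RatFunc K).denom ≠ 0 := by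
      rw [RatFunc.denom_C]; simp
    rw [RatFunc.eval_mul (RingHom.id K) a h1 hd, RatFunc.eval_C]
    rfl

theorem myEval_inv {K : Type*} [Field K] (φ : RatFunc K) (hφ : φ ≠ 0) (a : K) :
    (φ⁻¹).eval (RingHom.id K) a = (φ.eval (RingHom.id K) a)⁻¹ := by
  have hkey := RatFunc.num_denom_mul φ φ⁻¹
  rw [mul_inv_cancel₀ hφ, RatFunc.num_one, RatFunc.denom_one, one_mul, mul_one] at hkey
  have hNa : ∀ (ψ : RatFunc K), ¬ (ψ.num.eval a = 0 ∧ ψ.denom.eval a = 0) := by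
    intro ψ ⟨h1, h2⟩
    have := (RatFunc.isCoprime_num_denom ψ).map (Polynomial.evalRingHom a)
    rw [coe_evalRingHom, h1, h2] at this
    exact not_isUnit_zero (isCoprime_zero_left.mp this)
  have heval : ∀ (ψ : RatFunc K), ψ.eval (RingHom.id K) a = ψ.num.eval a / ψ.denom.eval a := by
    intro ψ; rfl
  have hkey' : φ.denom.eval a * (φ⁻¹).denom.eval a = φ.num.eval a * (φ⁻¹).num.eval a := by
    have := congrArg (Polynomial.eval a) hkey
    simpa using this
  rw [heval, heval]
  set N := φ.num.eval a; set D := φ.denom.eval a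
  set N' := (φ⁻¹).num.eval a; set D' := (φ⁻¹).denom.eval a
  by_cases hN : N = 0
  · have hD : D ≠ 0 := fun h => hNa φ ⟨hN, h⟩
    have : D' = 0 := by
      rcases mul_eq_zero.mp (by rw [hkey', hN, zero_mul] : D * D' = 0) with h | h
      · exact absurd h hD
      · exact h
    rw [hN, this, zero_div, div_zero, inv_zero]
  · by_cases hD : D = 0
    · have hN' : N' = 0 := by
        rcases mul_eq_zero.mp (by rw [← hkey', hD, zero_mul] : N * N' = 0) with h | h
        · exact absurd h hN
        · exact h
      rw [hD, hN', div_zero, zero_div, inv_zero]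
    · have hN' : N' ≠ 0 := by
        intro h
        have : D * D' = 0 := by rw [hkey', h, mul_zero]
        rcases mul_eq_zero.mp this with h' | h'
        · exact hD h'
        · exact hNa φ⁻¹ ⟨h, h'⟩
      have hD' : D' ≠ 0 := by
        intro h
        have : N * N' = 0 := by rw [← hkey', h, mul_zero]
        rcases mul_eq_zero.mp this with h' | h'
        · exact hN h'
        · exact hN' h'
      field_simp
      linear_combination -hkey'

theorem myKeyA {Γ : Type*} [AddCommGroup Γ] [LinearOrder Γ] [IsOrderedAddMonoid Γ] {b b' : WithTop Γ}
    (h : b + b' = 0) (t : WithTop Γ) :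
    (0 ≤ b' + t ↔ b ≤ t) ∧ (0 < b' + t ↔ b < t) := by
  have hb : b ≠ ⊤ := by rintro rfl; rw [top_add] at h; simp at h
  have hb' : b' ≠ ⊤ := by rintro rfl; rw [add_top] at h; simp at h
  have hcomm : b' + b = 0 := by rw [add_comm]; exact h
  constructor
  · constructor
    · intro h0
      have := add_le_add_right h0 b
      rwa [add_zero, ← add_assoc, h, zero_add] at this
    · intro h0
      have := add_le_add_right h0 b'
      rwa [hcomm] at this
  · constructor
    · intro h0
      have := WithTop.add_lt_add_left hb h0
      rwa [add_zero, ← add_assoc, h, zero_add] at this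
    · intro h0
      have := WithTop.add_lt_add_left hb' h0
      rwa [hcomm] at this

theorem myCofinalRoots {K : Type*} [Field K] (lam : Ordinal) (hlam : Order.IsSuccLimit lam)
    (z : Ordinal → K)
    (hinj : ∀ a b : Ordinal, 1 ≤ a → a < b → b < lam → z a ≠ z b)
    (ψ : RatFunc K) (hψ : ψ ≠ 0)
    (hcof : ∀ ν₂, ν₂ < lam → ∃ ν, ν₂ ≤ ν ∧ ν < lam ∧ ψ.eval (RingHom.id K) (z ν) = 0) :
    False := by
  have step : ∀ o : Ordinal, o < lam →
      ∃ ν, o < ν ∧ ν < lam ∧ ψ.eval (RingHom.id K) (z ν) = 0 := by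
    intro o ho
    obtain ⟨ν, h1, h2, h3⟩ := hcof (Order.succ o) (hlam.succ_lt ho)
    exact ⟨ν, lt_of_lt_of_le (Order.lt_succ o) h1, h2, h3⟩
  obtain ⟨F, hF⟩ : ∃ F : {o : Ordinal // o < lam} → {o : Ordinal // o < lam},
      ∀ p, p.1 < (F p).1 ∧ ψ.eval (RingHom.id K) (z (F p).1) = 0 := by
    refine ⟨fun p => ⟨(step p.1 p.2).choose, (step p.1 p.2).choose_spec.2.1⟩, fun p => ?_⟩
    exact ⟨(step p.1 p.2).choose_spec.1, (step p.1 p.2).choose_spec.2.2⟩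
  set g : ℕ → {o : Ordinal // o < lam} :=
    fun n => Nat.rec (⟨1, Ordinal.one_lt_of_isSuccLimit hlam⟩ : {o : Ordinal // o < lam}) (fun _ p => F p) n with hg
  have hgsucc : ∀ n, g (n + 1) = F (g n) := fun n => rfl
  have hg1 : ∀ n, (g n).1 < (g (n + 1)).1 := fun n => (hF (g n)).1
  have hg0 : ∀ n, ψ.eval (RingHom.id K) (z (g (n + 1)).1) = 0 := fun n => (hF (g n)).2
  have hone : ∀ n, (1 : Ordinal) ≤ (g n).1 := by
    intro n
    induction n with
    | zero => exact le_rfl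
    | succ n ih => exact ih.trans (hg1 n).le
  have hmono : StrictMono (fun n : ℕ => (g n).1) := strictMono_nat_of_lt_succ hg1
  set P : Polynomial K := ψ.num * ψ.denom with hP
  have hPne : P ≠ 0 := mul_ne_zero (RatFunc.num_ne_zero hψ) ψ.denom_ne_zero
  have hroot : ∀ n : ℕ, P.IsRoot (z (g (n + 1)).1) := by
    intro n
    have h := hg0 n
    have heq : ψ.eval (RingHom.id K) (z (g (n + 1)).1)
        = ψ.num.eval (z (g (n + 1)).1) / ψ.denom.eval (z (g (n + 1)).1) := rfl
    rw [heq] at h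
    rcases div_eq_zero_iff.mp h with h' | h'
    · simp [IsRoot, hP, h']
    · simp [IsRoot, hP, h']
  have hinjf : Function.Injective (fun n : ℕ => z (g (n + 1)).1) := by
    intro m n hmn
    by_contra hne
    rcases lt_or_gt_of_ne hne with hlt | hlt
    · exact hinj _ _ (hone (m + 1)) (hmono (by omega : m + 1 < n + 1)) (g (n + 1)).2 hmn
    · exact hinj _ _ (hone (n + 1)) (hmono (by omega : n + 1 < m + 1)) (g (m + 1)).2 hmn.symm
  exact (Set.infinite_of_injective_forall_mem (s := {x | P.IsRoot x}) hinjf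
    (fun n => hroot n)) (Polynomial.finite_setOf_isRoot hPne)



/-- for the valuation `v_E` on `K(X)` induced by a pseudo monotone
sequence `E` (characterized by `v_E(φ) ≥ 0` resp. `> 0` iff `v(φ(z_ν)) ≥ 0` resp. `> 0`
ultimately, and extending `v`), the sequence `{v(φ(z_ν))}` is ultimately constant iff
`v_E(φ) ∈ v(K^×)`, and in that case `v_E(φ)` equals the ultimate constant value. -/
theorem stmt12 {K : Type*} [Field K] {Γ : Type*} [AddCommGroup Γ] [LinearOrder Γ] [IsOrderedAddMonoid Γ]
    (v : AddValuation K (WithTop Γ)) (lam : Ordinal) (hlam : Order.IsSuccLimit lam)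
    (z : Ordinal → K)
    (hpm :
      (∀ ν₁ ν₂ ν₃ : Ordinal, ν₁ < ν₂ → ν₂ < ν₃ → ν₃ < lam →
        v (z ν₁ - z ν₂) < v (z ν₂ - z ν₃)) ∨
      (∀ ν₁ ν₂ ν₃ : Ordinal, ν₁ < ν₂ → ν₂ < ν₃ → ν₃ < lam →
        v (z ν₂ - z ν₃) < v (z ν₁ - z ν₂)) ∨
      (∃ d : WithTop Γ, ∀ ν μ : Ordinal, ν < lam → μ < lam → ν ≠ μ →
        v (z ν - z μ) = d))
    (vE : AddValuation (RatFunc K) (WithTop Γ))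
    (hvEC : ∀ c : K, vE (RatFunc.C c) = v c)
    (hvE0 : ∀ φ : RatFunc K, 0 ≤ vE φ ↔
      ∃ ν₀, ν₀ < lam ∧ ∀ ν, ν₀ ≤ ν → ν < lam → 0 ≤ v (φ.eval (RingHom.id K) (z ν)))
    (hvE1 : ∀ φ : RatFunc K, 0 < vE φ ↔
      ∃ ν₀, ν₀ < lam ∧ ∀ ν, ν₀ ≤ ν → ν < lam → 0 < v (φ.eval (RingHom.id K) (z ν)))
    (φ : RatFunc K) (hφ : φ ≠ 0) :
    ((∃ β : WithTop Γ, ∃ ν₀, ν₀ < lam ∧ ∀ ν, ν₀ ≤ ν → ν < lam →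
        v (φ.eval (RingHom.id K) (z ν)) = β) ↔
      ∃ c : K, c ≠ 0 ∧ vE φ = v c) ∧
    (∀ β : WithTop Γ, (∃ ν₀, ν₀ < lam ∧ ∀ ν, ν₀ ≤ ν → ν < lam →
        v (φ.eval (RingHom.id K) (z ν)) = β) → vE φ = β) := by
  have hvtop : ∀ x : K, v x = ⊤ ↔ x = 0 := by
    intro x
    constructor
    · intro h
      by_contra hx
      have h1 : v x + v x⁻¹ = 0 := by
        rw [← v.map_mul, mul_inv_cancel₀ hx, v.map_one]
      rw [h, top_add] at h1
      simp at h1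
    · rintro rfl; exact v.map_zero
  have hsum : ∀ x : K, x ≠ 0 → v x + v x⁻¹ = 0 := by
    intro x hx
    rw [← v.map_mul, mul_inv_cancel₀ hx, v.map_one]
  -- key equivalences
  have key0 : ∀ (c : K), c ≠ 0 → ∀ ψ : RatFunc K,
      (v c ≤ vE ψ ↔ ∃ ν₀, ν₀ < lam ∧ ∀ ν, ν₀ ≤ ν → ν < lam →
        v c ≤ v (ψ.eval (RingHom.id K) (z ν))) := by
    intro c hc ψ
    have hs := hsum c hc
    have h := hvE0 (RatFunc.C c⁻¹ * ψ)
    have e1 : vE (RatFunc.C c⁻¹ * ψ) = v c⁻¹ + vE ψ := by rw [vE.map_mul, hvEC]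
    rw [e1, (myKeyA hs (vE ψ)).1] at h
    have e2 : ∀ ν : Ordinal, (0 ≤ v ((RatFunc.C c⁻¹ * ψ).eval (RingHom.id K) (z ν)))
        ↔ v c ≤ v (ψ.eval (RingHom.id K) (z ν)) := by
      intro ν
      rw [myEval_C_mul, v.map_mul, (myKeyA hs _).1]
    simp only [e2] at h
    exact h
  have key1 : ∀ (c : K), c ≠ 0 → ∀ ψ : RatFunc K,
      (v c < vE ψ ↔ ∃ ν₀, ν₀ < lam ∧ ∀ ν, ν₀ ≤ ν → ν < lam →
        v c < v (ψ.eval (RingHom.id K) (z ν))) := by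
    intro c hc ψ
    have hs := hsum c hc
    have h := hvE1 (RatFunc.C c⁻¹ * ψ)
    have e1 : vE (RatFunc.C c⁻¹ * ψ) = v c⁻¹ + vE ψ := by rw [vE.map_mul, hvEC]
    rw [e1, (myKeyA hs (vE ψ)).2] at h
    have e2 : ∀ ν : Ordinal, (0 < v ((RatFunc.C c⁻¹ * ψ).eval (RingHom.id K) (z ν)))
        ↔ v c < v (ψ.eval (RingHom.id K) (z ν)) := by
      intro ν
      rw [myEval_C_mul, v.map_mul, (myKeyA hs _).2]
    simp only [e2] at h
    exact h
  -- dichotomy from pseudo-monotonicity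
  have hdich : (∀ ν, ν < lam → z ν = z 0) ∨
      (∀ a b : Ordinal, 1 ≤ a → a < b → b < lam → z a ≠ z b) := by
    rcases hpm with h | h | ⟨d, hd⟩
    · right
      intro a b _ hab hb heq
      have h1 : v (z a - z b) = ⊤ := by rw [heq, sub_self, v.map_zero]
      have h2 := h a b (Order.succ b) hab (Order.lt_succ b) (hlam.succ_lt hb)
      rw [h1] at h2
      exact not_top_lt h2
    · right
      intro a b ha hab hb heq
      have h1 : v (z a - z b) = ⊤ := by rw [heq, sub_self, v.map_zero]
      have h2 := h 0 a b (lt_of_lt_of_le zero_lt_one ha) hab hb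
      rw [h1] at h2
      exact not_top_lt h2
    · by_cases hdt : d = ⊤
      · left
        intro ν hν
        rcases eq_or_ne ν 0 with rfl | hν0
        · rfl
        have h1 := hd ν 0 hν hlam.pos hν0
        have h2 : z ν - z 0 = 0 := (hvtop _).mp (by rw [h1, hdt])
        exact sub_eq_zero.mp h2
      · right
        intro a b ha hab hb heq
        have h1 := hd a b (hab.trans hb) hb hab.ne
        rw [heq, sub_self, v.map_zero] at h1
        exact hdt h1.symm
  have htoppos : (0 : WithTop Γ) < ⊤ := lt_top_iff_ne_top.mpr (by simp)
  -- no tail of zeros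
  have hnotail : ∀ ψ : RatFunc K, ψ ≠ 0 →
      (∃ ν₀, ν₀ < lam ∧ ∀ ν, ν₀ ≤ ν → ν < lam → ψ.eval (RingHom.id K) (z ν) = 0) →
      False := by
    rintro ψ hψ ⟨ν₀, hν₀, hz0⟩
    rcases hdich with hconst | hinj
    · have hall : ∀ ν, ν < lam → ψ.eval (RingHom.id K) (z ν) = 0 := by
        intro ν hν
        rw [hconst ν hν, ← hconst ν₀ hν₀]
        exact hz0 ν₀ le_rfl hν₀
      have h1 : 0 < vE ψ := (hvE1 ψ).mpr ⟨0, hlam.pos, fun ν _ hν => by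
        rw [hall ν hν, v.map_zero]; exact htoppos⟩
      have h2 : 0 < vE ψ⁻¹ := (hvE1 ψ⁻¹).mpr ⟨0, hlam.pos, fun ν _ hν => by
        rw [myEval_inv ψ hψ, hall ν hν, inv_zero, v.map_zero]; exact htoppos⟩
      have h3 : vE ψ + vE ψ⁻¹ = 0 := by
        rw [← vE.map_mul, mul_inv_cancel₀ hψ, vE.map_one]
      have h4 : (0 : WithTop Γ) < 0 :=
        calc (0 : WithTop Γ) < vE ψ := h1
          _ ≤ vE ψ + vE ψ⁻¹ := le_add_of_nonneg_right h2.le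
          _ = 0 := h3
      exact lt_irrefl _ h4
    · refine myCofinalRoots lam hlam z hinj ψ hψ (fun ν₂ hν₂ => ?_)
      exact ⟨max ν₂ ν₀, le_max_left _ _, max_lt hν₂ hν₀,
        hz0 _ (le_max_right _ _) (max_lt hν₂ hν₀)⟩
  -- second conjunct
  have main2 : ∀ β : WithTop Γ, (∃ ν₀, ν₀ < lam ∧ ∀ ν, ν₀ ≤ ν → ν < lam →
      v (φ.eval (RingHom.id K) (z ν)) = β) → vE φ = β := by
    rintro β ⟨ν₀, hν₀, hβ⟩
    by_cases hβt : β = ⊤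
    · exact absurd ⟨ν₀, hν₀, fun ν h1 h2 => (hvtop _).mp (by rw [hβ ν h1 h2, hβt])⟩
        (hnotail φ hφ)
    · set a := φ.eval (RingHom.id K) (z ν₀) with ha
      have hva : v a = β := hβ ν₀ le_rfl hν₀
      have ha0 : a ≠ 0 := fun h => hβt (by rw [← hva, h, v.map_zero])
      have hle : v a ≤ vE φ := (key0 a ha0 φ).mpr ⟨ν₀, hν₀, fun ν h1 h2 => by
        rw [hβ ν h1 h2]; exact hva.le⟩
      have hnlt : ¬ v a < vE φ := by
        intro hlt
        obtain ⟨ν₁, hν₁, hstrict⟩ := (key1 a ha0 φ).mp hlt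
        have hm : max ν₀ ν₁ < lam := max_lt hν₀ hν₁
        have h1 := hstrict (max ν₀ ν₁) (le_max_right _ _) hm
        rw [hβ (max ν₀ ν₁) (le_max_left _ _) hm, ← hva] at h1
        exact lt_irrefl _ h1
      rw [← hva]
      exact le_antisymm (not_lt.mp hnlt) hle
  refine ⟨⟨?_, ?_⟩, main2⟩
  · rintro ⟨β, ν₀, hν₀, hβ⟩
    by_cases hβt : β = ⊤
    · exact absurd ⟨ν₀, hν₀, fun ν h1 h2 => (hvtop _).mp (by rw [hβ ν h1 h2, hβt])⟩
        (hnotail φ hφ)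
    · refine ⟨φ.eval (RingHom.id K) (z ν₀), ?_, ?_⟩
      · intro h
        exact hβt (by rw [← hβ ν₀ le_rfl hν₀, h, v.map_zero])
      · rw [main2 β ⟨ν₀, hν₀, hβ⟩, ← hβ ν₀ le_rfl hν₀]
  · rintro ⟨c, hc, hvc⟩
    rcases hdich with hconst | hinj
    · exact ⟨v (φ.eval (RingHom.id K) (z 0)), 0, hlam.pos,
        fun ν _ hν => by rw [hconst ν hν]⟩
    · have hs := hsum c hc
      obtain ⟨ν₀, hν₀, hT0⟩ := (key0 c hc φ).mp hvc.ge
      have hinvE : vE φ⁻¹ = v c⁻¹ := by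
        have h3 : vE φ + vE φ⁻¹ = 0 := by
          rw [← vE.map_mul, mul_inv_cancel₀ hφ, vE.map_one]
        have hcne : v c ≠ ⊤ := by
          intro h
          rw [h, top_add] at hs
          simp at hs
        refine WithTop.add_left_cancel hcne ?_
        rw [hs, ← hvc]
        exact h3
      obtain ⟨ν₁, hν₁, hT1⟩ := (key0 c⁻¹ (inv_ne_zero hc) φ⁻¹).mp hinvE.ge
      have hnz : ∃ ν₂, ν₂ < lam ∧ ∀ ν, ν₂ ≤ ν → ν < lam →
          φ.eval (RingHom.id K) (z ν) ≠ 0 := by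
        by_contra hcon
        push_neg at hcon
        refine myCofinalRoots lam hlam z hinj φ hφ (fun ν₂ hν₂ => ?_)
        obtain ⟨ν, h1, h2, h3⟩ := hcon ν₂ hν₂
        exact ⟨ν, h1, h2, h3⟩
      obtain ⟨ν₂, hν₂, hT2⟩ := hnz
      refine ⟨v c, max (max ν₀ ν₁) ν₂, max_lt (max_lt hν₀ hν₁) hν₂, ?_⟩
      intro ν h1 h2
      set e := φ.eval (RingHom.id K) (z ν) with he
      have he0 : e ≠ 0 := hT2 ν (le_trans (le_max_right _ _) h1) h2
      have h1a : v c ≤ v e :=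
        hT0 ν (le_trans ((le_max_left _ _).trans (le_max_left _ _)) h1) h2
      have h1b : v c⁻¹ ≤ v e⁻¹ := by
        have := hT1 ν (le_trans ((le_max_right _ _).trans (le_max_left _ _)) h1) h2
        rwa [myEval_inv φ hφ] at this
      have hse := hsum e he0
      have h2a : v e ≤ v c :=
        calc v e = v e + (v c + v c⁻¹) := by rw [hs, add_zero]
          _ = v c + (v e + v c⁻¹) := by rw [add_left_comm]
          _ ≤ v c + (v e + v e⁻¹) := add_le_add_right (add_le_add_right h1b (v e)) (v c)
          _ = v c := by rw [hse, add_zero]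
      exact le_antisymm h2a h1a
end

section
/- Let E = {z_ν}_{ν<λ} be a pseudo convergent sequence in (K,v) and v_E the induced valuation on K(X) (v_E(φ) ≥ 0 iff v(φ(z_ν)) ≥ 0 ultimately). Then the sequence {v_E(X - z_ν)}_{ν<λ} is strictly increasing; in particular, X is a limit of E in (K(X), v_E). -/
/-- for a pseudo convergent sequence `E` and the induced valuation `v_E`
on `K(X)`, the sequence `{v_E(X - z_ν)}` is strictly increasing; in particular `X` is a
limit of `E` with respect to `v_E`. -/
theorem stmt13 {K : Type*} [Field K] {Γ : Type*} [AddCommGroup Γ] [LinearOrder Γ] [IsOrderedAddMonoid Γ]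
    (v : AddValuation K (WithTop Γ)) (lam : Ordinal) (hlam : Order.IsSuccLimit lam)
    (z : Ordinal → K)
    (hpcs : ∀ ν₁ ν₂ ν₃ : Ordinal, ν₁ < ν₂ → ν₂ < ν₃ → ν₃ < lam →
      v (z ν₁ - z ν₂) < v (z ν₂ - z ν₃))
    (vE : AddValuation (RatFunc K) (WithTop Γ))
    (hvEC : ∀ c : K, vE (RatFunc.C c) = v c)
    (hvE0 : ∀ φ : RatFunc K, 0 ≤ vE φ ↔
      ∃ ν₀, ν₀ < lam ∧ ∀ ν, ν₀ ≤ ν → ν < lam → 0 ≤ v (φ.eval (RingHom.id K) (z ν)))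
    (hvE1 : ∀ φ : RatFunc K, 0 < vE φ ↔
      ∃ ν₀, ν₀ < lam ∧ ∀ ν, ν₀ ≤ ν → ν < lam → 0 < v (φ.eval (RingHom.id K) (z ν))) :
    (∀ ν μ : Ordinal, ν < μ → μ < lam →
      vE (RatFunc.X - RatFunc.C (z ν)) < vE (RatFunc.X - RatFunc.C (z μ))) ∧
    (∃ ν₀, ν₀ < lam ∧ ∀ ν, ν₀ ≤ ν → ν < lam →
      vE (RatFunc.X - RatFunc.C (z ν)) = v (z ν - z (ν + 1))) := by
  -- Lemma A: for ν < ρ < lam, v (z ν - z ρ) = v (z ν - z (ν+1))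
  have hA : ∀ ν ρ : Ordinal, ν < ρ → ρ < lam → v (z ν - z ρ) = v (z ν - z (ν + 1)) := by
    intro ν ρ hνρ hρ
    have hle : ν + 1 ≤ ρ := by
      rw [Ordinal.add_one_eq_succ, Order.succ_le_iff]; exact hνρ
    rcases eq_or_lt_of_le hle with h | h
    · rw [h]
    · have hlt : v (z ν - z (ν + 1)) < v (z (ν + 1) - z ρ) :=
        hpcs ν (ν + 1) ρ (by rw [Ordinal.add_one_eq_succ]; exact Order.lt_succ ν) h hρ
      have : z ν - z ρ = (z ν - z (ν + 1)) + (z (ν + 1) - z ρ) := by ring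
      rw [this, v.map_add_eq_of_lt_left hlt]
  -- Lemma B: δ is strictly increasing
  have hB : ∀ ν μ : Ordinal, ν < μ → μ < lam →
      v (z ν - z (ν + 1)) < v (z μ - z (μ + 1)) := by
    intro ν μ hνμ hμ
    have hμ1 : μ + 1 < lam := by
      rw [Ordinal.add_one_eq_succ]; exact hlam.succ_lt hμ
    have := hpcs ν μ (μ + 1) hνμ (by rw [Ordinal.add_one_eq_succ]; exact Order.lt_succ μ) hμ1
    rwa [hA ν μ hνμ hμ] at this
  -- Main claim: vE (X - C (z ν)) = v (z ν - z (ν+1)) for all ν < lam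
  have hval : ∀ ν : Ordinal, ν < lam →
      vE (RatFunc.X - RatFunc.C (z ν)) = v (z ν - z (ν + 1)) := by
    intro ν hν
    set c : K := z ν - z (ν + 1) with hc
    have hν1 : ν + 1 < lam := by
      rw [Ordinal.add_one_eq_succ]; exact hlam.succ_lt hν
    have hδtop : v c < ⊤ :=
      lt_of_lt_of_le (hB ν (ν + 1)
        (by rw [Ordinal.add_one_eq_succ]; exact Order.lt_succ ν) hν1) le_top
    have hc0 : c ≠ 0 := by
      intro h
      rw [h, v.map_zero] at hδtop
      exact lt_irrefl _ hδtop
    set ψ : RatFunc K := (RatFunc.X - RatFunc.C (z ν)) * RatFunc.C c⁻¹ with hψ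
    -- evaluation of ψ
    have heval : ∀ ρ : Ordinal, ψ.eval (RingHom.id K) (z ρ) = (z ρ - z ν) * c⁻¹ := by
      intro ρ
      have : ψ = algebraMap (Polynomial K) (RatFunc K)
          ((Polynomial.X - Polynomial.C (z ν)) * Polynomial.C c⁻¹) := by
        simp [hψ, map_mul, map_sub, RatFunc.algebraMap_X, RatFunc.algebraMap_C]
      rw [this, RatFunc.eval_algebraMap]
      simp
    -- value of eval of ψ at z ρ for ρ > ν
    have hveval : ∀ ρ : Ordinal, ν < ρ → ρ < lam →
        v (ψ.eval (RingHom.id K) (z ρ)) = 0 := by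
      intro ρ hνρ hρ
      rw [heval, v.map_mul]
      have h1 : v (z ρ - z ν) = v c := by
        have : z ρ - z ν = -(z ν - z ρ) := by ring
        rw [this, v.map_neg, hA ν ρ hνρ hρ]
      rw [h1, ← v.map_mul, mul_inv_cancel₀ hc0, v.map_one]
    have h0 : 0 ≤ vE ψ := by
      rw [hvE0]
      refine ⟨ν + 1, hν1, fun ρ h1 h2 => ?_⟩
      have hνρ : ν < ρ := lt_of_lt_of_le
        (by rw [Ordinal.add_one_eq_succ]; exact Order.lt_succ ν) h1
      rw [hveval ρ hνρ h2]
    have hnot : ¬ 0 < vE ψ := by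
      intro h
      obtain ⟨ν₀, hν₀, hall⟩ := (hvE1 ψ).mp h
      have hρ : max ν₀ (ν + 1) < lam := max_lt hν₀ hν1
      have := hall (max ν₀ (ν + 1)) (le_max_left _ _) hρ
      have hνρ : ν < max ν₀ (ν + 1) := lt_of_lt_of_le
        (by rw [Ordinal.add_one_eq_succ]; exact Order.lt_succ ν) (le_max_right _ _)
      rw [hveval _ hνρ hρ] at this
      exact lt_irrefl _ this
    have hψ0 : vE ψ = 0 := le_antisymm (not_lt.mp hnot) h0
    have hfact : RatFunc.X - RatFunc.C (z ν) = ψ * RatFunc.C c := by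
      rw [hψ, mul_assoc, ← map_mul, inv_mul_cancel₀ hc0, map_one, mul_one]
    rw [hfact, vE.map_mul, hψ0, hvEC, zero_add]
  constructor
  · intro ν μ hνμ hμ
    rw [hval ν (hνμ.trans hμ), hval μ hμ]
    exact hB ν μ hνμ hμ
  · exact ⟨0, hlam.pos, fun ν _ hν => hval ν hν⟩
end

section
/- Let (K,v) be a valued field, v̄ an extension to K̄, and E a pseudo convergent or pseudo divergent sequence in (K,v). If a, b ∈ K̄ are two distinct limits of E and α := v̄_E(X - a) ∉ v̄(K̄^×) (the value of X - a under a common extension v̄_E of v̄ and v_E to K̄(X) is not in the value group of K̄), then v̄_E(X - a) = v̄_E(X - b) = α and v̄(a - b) > α. -/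
lemma aux_pos_iff {L : Type*} [Field L] {Γ : Type*} [AddCommGroup Γ] [LinearOrder Γ]
    [IsOrderedAddMonoid Γ]
    (w : AddValuation L (WithTop Γ)) {y c : L} (hc : c ≠ 0) :
    0 < w y ↔ w c < w (y * c) := by
  have hct : w c ≠ ⊤ := w.ne_top_iff.mpr hc
  rw [w.map_mul, ← WithTop.add_lt_add_iff_right (x := 0) (y := w y) hct, zero_add]

/-- if `a ≠ b` are two limits in `K̄` of a pcs or pds `E` and
`α := v̄_E(X - a)` is not in the value group of `K̄`, then
`v̄_E(X - a) = v̄_E(X - b) = α` and `v̄(a - b) > α`. Here `v̄_E` is the valuation on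
`K̄(X)` induced by `E`, characterized by its positivity/nonnegativity on ultimate
values and extending `v̄`. -/
theorem stmt17 {F : Type*} [Field F] [IsAlgClosed F]
    {Γ : Type*} [AddCommGroup Γ] [LinearOrder Γ] [IsOrderedAddMonoid Γ]
    (v : AddValuation F (WithTop Γ)) (K : Subfield F)
    (lam : Ordinal) (hlam : Order.IsSuccLimit lam) (z : Ordinal → F)
    (hzK : ∀ ν : Ordinal, ν < lam → z ν ∈ K)
    (δ : Ordinal → WithTop Γ)
    (hrep : ∀ ν μ : Ordinal, ν < μ → μ < lam → v (z ν - z μ) = min (δ ν) (δ μ))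
    (hmono : (∀ ν μ : Ordinal, ν < μ → μ < lam → δ ν < δ μ) ∨
             (∀ ν μ : Ordinal, ν < μ → μ < lam → δ μ < δ ν))
    (vE : AddValuation (RatFunc F) (WithTop Γ))
    (hvEC : ∀ c : F, vE (RatFunc.C c) = v c)
    (hvE0 : ∀ φ : RatFunc F, 0 ≤ vE φ ↔
      ∃ ν₀, ν₀ < lam ∧ ∀ ν, ν₀ ≤ ν → ν < lam → 0 ≤ v (φ.eval (RingHom.id F) (z ν)))
    (hvE1 : ∀ φ : RatFunc F, 0 < vE φ ↔
      ∃ ν₀, ν₀ < lam ∧ ∀ ν, ν₀ ≤ ν → ν < lam → 0 < v (φ.eval (RingHom.id F) (z ν)))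
    (a b : F) (hab : a ≠ b)
    (hla : ∃ ν₀, ν₀ < lam ∧ ∀ ν, ν₀ ≤ ν → ν < lam → v (a - z ν) = δ ν)
    (hlb : ∃ ν₀, ν₀ < lam ∧ ∀ ν, ν₀ ≤ ν → ν < lam → v (b - z ν) = δ ν)
    (hα : ∀ c : F, c ≠ 0 → vE (RatFunc.X - RatFunc.C a) ≠ v c) :
    vE (RatFunc.X - RatFunc.C b) = vE (RatFunc.X - RatFunc.C a) ∧
    vE (RatFunc.X - RatFunc.C a) < v (a - b) := by

  have hc : a - b ≠ 0 := sub_ne_zero.mpr hab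
  set c := a - b with hcdef
  have key : ∀ x : F, (∃ ν₀, ν₀ < lam ∧ ∀ ν, ν₀ ≤ ν → ν < lam → v (x - z ν) = δ ν) →
      (v c < vE (RatFunc.X - RatFunc.C x) ↔
        ∃ ν₀, ν₀ < lam ∧ ∀ ν, ν₀ ≤ ν → ν < lam → v c < δ ν) := by
    intro x hlx
    set φ : RatFunc F :=
      algebraMap (Polynomial F) (RatFunc F)
        ((Polynomial.X - Polynomial.C x) * Polynomial.C c⁻¹) with hφ
    have hCc : (RatFunc.C c : RatFunc F) ≠ 0 := by
      simpa using (map_ne_zero (RatFunc.C (K := F))).mpr hc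
    have hmul : φ * RatFunc.C c = RatFunc.X - RatFunc.C x := by
      rw [hφ, ← RatFunc.algebraMap_C c, ← map_mul, mul_assoc, ← Polynomial.C_mul,
        inv_mul_cancel₀ hc, Polynomial.C_1, mul_one, map_sub, RatFunc.algebraMap_X,
        RatFunc.algebraMap_C]
    have heval : ∀ t : F, φ.eval (RingHom.id F) t = (t - x) * c⁻¹ := by
      intro t
      rw [hφ, RatFunc.eval_algebraMap]
      simp
    have h1 : v c < vE (RatFunc.X - RatFunc.C x) ↔ 0 < vE φ := by
      rw [← hmul, ← hvEC c]
      exact (aux_pos_iff vE hCc).symm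
    rw [h1, hvE1 φ]
    obtain ⟨ν₁, hν₁, hν₁'⟩ := hlx
    constructor
    · rintro ⟨ν₀, hν₀, h⟩
      refine ⟨max ν₀ ν₁, max_lt hν₀ hν₁, fun ν hν hνl => ?_⟩
      have h2 := h ν (le_trans (le_max_left _ _) hν) hνl
      rw [heval] at h2
      have h3 : v c < v ((z ν - x) * c⁻¹ * c) := (aux_pos_iff v hc).mp h2
      rw [mul_assoc, inv_mul_cancel₀ hc, mul_one, v.map_sub_swap (z ν) x,
        hν₁' ν (le_trans (le_max_right _ _) hν) hνl] at h3
      exact h3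
    · rintro ⟨ν₀, hν₀, h⟩
      refine ⟨max ν₀ ν₁, max_lt hν₀ hν₁, fun ν hν hνl => ?_⟩
      rw [heval]
      refine (aux_pos_iff v hc).mpr ?_
      rw [mul_assoc, inv_mul_cancel₀ hc, mul_one, v.map_sub_swap (z ν) x,
        hν₁' ν (le_trans (le_max_right _ _) hν) hνl]
      exact h ν (le_trans (le_max_left _ _) hν) hνl
  set α := vE (RatFunc.X - RatFunc.C a) with hαdef
  set β := vE (RatFunc.X - RatFunc.C b) with hβdef
  have hsand : v c < α ↔ v c < β := (key a hla).trans (key b hlb).symm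
  have hCab : (RatFunc.X - RatFunc.C b) - (RatFunc.X - RatFunc.C a) = RatFunc.C c := by
    rw [hcdef, map_sub]
    ring
  have hvcα : v c ≠ α := (hα c hc).symm
  have hβα : β = α := by
    by_contra hne
    have hd : β ≠ vE (-(RatFunc.X - RatFunc.C a)) := by rwa [vE.map_neg]
    have hmin : v c = min β α := by
      have := vE.map_add_of_distinct_val hd
      rw [vE.map_neg, ← sub_eq_add_neg, hCab, hvEC] at this
      exact this
    rcases lt_or_gt_of_ne hne with hlt | hgt
    · have : v c = β := by rw [hmin, min_eq_left hlt.le]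
      have h2 : v c < α := this ▸ hlt
      exact absurd ((hsand.mp h2).trans_eq this.symm) (lt_irrefl _)
    · exact hvcα (by rw [hmin, min_eq_right hgt.le])
  refine ⟨hβα, ?_⟩
  have hmin : min β α ≤ v c := by
    have := vE.map_sub (RatFunc.X - RatFunc.C b) (RatFunc.X - RatFunc.C a)
    rw [hCab, hvEC] at this
    exact this
  rw [hβα, min_self] at hmin
  exact lt_of_le_of_ne hmin (hα c hc).symm.symm
end
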